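/- Fix e∈[0,1), e_J∈[0,1), Θ∈ℝ, G>0, and define Ā₁(a), B̄₁(a), C̄₁(a) as in the context. Then there exists a₀>0 such that for all a with 0<a<a₀ the determinant D₁(a) = Ā₁(a)·C̄₁(a) − B̄₁(a)² is strictly positive. (The leading term is 9(1 + 3e² − 4e⁴)·a⁴/(16G²(1−e_J²)³), and 1 + 3e² − 4e⁴ = (1−e²)(1+4e²) > 0.) -/

import Mathlib

open Real

/-- Averaged coefficient `Ā₁` of `p₃²` in the small-inclination case, `ω+Ω=Θ`. -/
noncomputable def Abar1 (e eJ Θ G a : ℝ) : ℝ :=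
  3 * (1 + 4 * e ^ 2 - 5 * e ^ 2 * Real.cos Θ ^ 2) * a ^ 2 /
      (4 * G * (1 - eJ ^ 2) ^ ((3:ℝ) / 2))
    + 15 * e * eJ * Real.cos Θ * (70 * e ^ 2 * Real.cos Θ ^ 2 - 60 * e ^ 2 - 10) * a ^ 3 /
      (64 * G * (1 - eJ ^ 2) ^ ((5:ℝ) / 2))

/-- Averaged coefficient `B̄₁` of `p₃q₃` in the small-inclination case, `ω+Ω=Θ`. -/
noncomputable def Bbar1 (e eJ Θ G a : ℝ) : ℝ :=
  15 * e ^ 2 * Real.cos Θ * Real.sin Θ * a ^ 2 /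
      (4 * G * (1 - eJ ^ 2) ^ ((3:ℝ) / 2))
    - 15 * e * Real.sin Θ * eJ * (140 * e ^ 2 * Real.cos Θ ^ 2 - 17 * e ^ 2 + 24) * a ^ 3 /
      (128 * G * (1 - eJ ^ 2) ^ ((5:ℝ) / 2))

/-- Averaged coefficient `C̄₁` of `q₃²` in the small-inclination case, `ω+Ω=Θ`. -/
noncomputable def Cbar1 (e eJ Θ G a : ℝ) : ℝ :=
  3 * (1 - e ^ 2 + 5 * e ^ 2 * Real.cos Θ ^ 2) * a ^ 2 /
      (4 * G * (1 - eJ ^ 2) ^ ((3:ℝ) / 2))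
    - 15 * e * eJ * Real.cos Θ * (70 * e ^ 2 * Real.cos Θ ^ 2 - 27 * e ^ 2 + 34) * a ^ 3 /
      (64 * G * (1 - eJ ^ 2) ^ ((5:ℝ) / 2))

theorem determinant_pos_small_inclination
    (e eJ Θ G : ℝ) (he0 : 0 ≤ e) (he1 : e < 1) (heJ0 : 0 ≤ eJ) (heJ1 : eJ < 1)
    (hG : 0 < G) :
    ∃ a₀ > 0, ∀ a : ℝ, 0 < a → a < a₀ →
      0 < Abar1 e eJ Θ G a * Cbar1 e eJ Θ G a - Bbar1 e eJ Θ G a ^ 2 := by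
  have h1 : (0:ℝ) < 1 - eJ ^ 2 := by nlinarith
  set c := Real.cos Θ with hc
  set s := Real.sin Θ with hsdef
  have hs : s ^ 2 = 1 - c ^ 2 := by
    have := Real.sin_sq_add_cos_sq Θ; rw [hc, hsdef]; linarith
  set u := (1 - eJ ^ 2) ^ ((3:ℝ)/2) with hu'
  set v := (1 - eJ ^ 2) ^ ((5:ℝ)/2) with hv'
  have hu : 0 < u := Real.rpow_pos_of_pos h1 _
  have hv : 0 < v := Real.rpow_pos_of_pos h1 _
  set A0 := 3 * (1 + 4 * e ^ 2 - 5 * e ^ 2 * c ^ 2) / (4 * G * u) with hA0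
  set A1 := 15 * e * eJ * c * (70 * e ^ 2 * c ^ 2 - 60 * e ^ 2 - 10) / (64 * G * v) with hA1
  set B0 := 15 * e ^ 2 * c * s / (4 * G * u) with hB0
  set B1 := -(15 * e * s * eJ * (140 * e ^ 2 * c ^ 2 - 17 * e ^ 2 + 24) / (128 * G * v)) with hB1
  set C0 := 3 * (1 - e ^ 2 + 5 * e ^ 2 * c ^ 2) / (4 * G * u) with hC0
  set C1 := -(15 * e * eJ * c * (70 * e ^ 2 * c ^ 2 - 27 * e ^ 2 + 34) / (64 * G * v)) with hC1
  set g : ℝ → ℝ := fun a => (A0 + a * A1) * (C0 + a * C1) - (B0 + a * B1) ^ 2 with hg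
  have hkey : A0 * C0 - B0 ^ 2 = 9 * ((1 - e ^ 2) * (1 + 4 * e ^ 2)) / (16 * G ^ 2 * u ^ 2) := by
    rw [hA0, hB0, hC0]
    field_simp
    linear_combination (-(3600:ℝ)*e^4*c^2) * hs
  have hg0 : 0 < g 0 := by
    simp only [hg, zero_mul, add_zero]
    rw [hkey]
    have h2 : 0 < (1 - e ^ 2) * (1 + 4 * e ^ 2) := mul_pos (by nlinarith) (by positivity)
    apply div_pos (by linarith) (by positivity)
  have hcont : Continuous g := by fun_prop
  have hev : ∀ᶠ a in nhds (0:ℝ), 0 < g a :=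
    (hcont.tendsto 0).eventually (eventually_gt_nhds hg0)
  rw [Metric.eventually_nhds_iff] at hev
  obtain ⟨δ, hδ, hδ'⟩ := hev
  refine ⟨δ, hδ, fun a ha haδ => ?_⟩
  have hga : 0 < g a := hδ' (by simpa [abs_of_pos ha] using haδ)
  have hA : Abar1 e eJ Θ G a = a ^ 2 * (A0 + a * A1) := by
    rw [Abar1, hA0, hA1]; field_simp; ring
  have hB : Bbar1 e eJ Θ G a = a ^ 2 * (B0 + a * B1) := by
    rw [Bbar1, hB0, hB1]; field_simp; ring
  have hC : Cbar1 e eJ Θ G a = a ^ 2 * (C0 + a * C1) := by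
    rw [Cbar1, hC0, hC1]; field_simp; ring
  have : Abar1 e eJ Θ G a * Cbar1 e eJ Θ G a - Bbar1 e eJ Θ G a ^ 2 = a ^ 4 * g a := by
    rw [hA, hB, hC, hg]; ring
  rw [this]
  positivity
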